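/- For every z > −1, 2 φ(z)/(z + √(z^2+4)) ≤ 1 − Φ(z) ≤ 4 φ(z)/(3z + √(z^2+8)), where Φ is the standard normal cdf and φ its density. -/

import Mathlib

/-- The standard normal density φ(x) = exp(−x²/2)/√(2π). -/
noncomputable def stdNormalPDF (x : ℝ) : ℝ :=
  Real.exp (-x ^ 2 / 2) / Real.sqrt (2 * Real.pi)

/-- The standard normal distribution function Φ(z) = ∫_{−∞}^z φ(x) dx. -/
noncomputable def stdNormalCDF (z : ℝ) : ℝ :=
  ∫ x in Set.Iic z, stdNormalPDF x

open Real MeasureTheory Filter Set Topology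

namespace SW

lemma pdf_pos (x : ℝ) : 0 < stdNormalPDF x :=
  div_pos (exp_pos _) (sqrt_pos.2 (by positivity))

lemma cont_pdf : Continuous stdNormalPDF := by
  unfold stdNormalPDF; fun_prop

lemma integrable_pdf : Integrable stdNormalPDF := by
  have h : stdNormalPDF = fun x => Real.exp (-(1/2) * x ^ 2) * (Real.sqrt (2 * π))⁻¹ := by
    funext x; rw [stdNormalPDF]; rw [div_eq_mul_inv]; ring_nf
  rw [h]
  exact (integrable_exp_neg_mul_sq (by norm_num)).mul_const _

lemma integral_pdf : ∫ x, stdNormalPDF x = 1 := by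
  have h := integral_gaussian (1/2 : ℝ)
  have h2 : Real.sqrt (π / (1/2)) = Real.sqrt (2 * π) := by norm_num [mul_comm]
  have h4 : ∫ x : ℝ, stdNormalPDF x = (∫ x : ℝ, Real.exp (-(1/2) * x ^ 2)) * (Real.sqrt (2 * π))⁻¹ := by
    rw [← integral_mul_const]
    congr 1; funext x
    rw [stdNormalPDF, div_eq_mul_inv]; ring_nf
  rw [h4, h, h2, mul_inv_cancel₀]
  positivity

lemma tail_eq (z : ℝ) : 1 - stdNormalCDF z = ∫ x in Ioi z, stdNormalPDF x := by
  have := intervalIntegral.integral_Iic_add_Ioi (b := z) integrable_pdf.integrableOn integrable_pdf.integrableOn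
  rw [integral_pdf] at this
  rw [stdNormalCDF]; linarith

lemma hasDerivAt_cdf (z : ℝ) : HasDerivAt stdNormalCDF (stdNormalPDF z) z := by
  have key : stdNormalCDF = fun x => stdNormalCDF 0 + ∫ t in (0:ℝ)..x, stdNormalPDF t := by
    funext x
    rw [← intervalIntegral.integral_Iic_sub_Iic integrable_pdf.integrableOn
      integrable_pdf.integrableOn]
    simp [stdNormalCDF]
  rw [key]
  exact (intervalIntegral.integral_hasDerivAt_right
    (cont_pdf.intervalIntegrable _ _)
    (cont_pdf.stronglyMeasurable.stronglyMeasurableAtFilter)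
    cont_pdf.continuousAt).const_add _

lemma hasDerivAt_pdf (z : ℝ) : HasDerivAt stdNormalPDF (-z * stdNormalPDF z) z := by
  have h1 : HasDerivAt (fun x : ℝ => -x ^ 2 / 2) (-z) z := by
    have := ((hasDerivAt_pow 2 z).neg).div_const 2
    refine this.congr_deriv ?_; push_cast; ring
  have h2 := (Real.hasDerivAt_exp (-z ^ 2 / 2)).comp z h1
  have h3 := h2.div_const (Real.sqrt (2 * π))
  refine h3.congr_deriv ?_
  simp [stdNormalPDF]; ring

lemma tail_tendsto : Tendsto (fun z => 1 - stdNormalCDF z) atTop (𝓝 0) := by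
  have h : Tendsto (fun z : ℝ => ∫ x in Ioi z, stdNormalPDF x) atTop
      (𝓝 (∫ x in ⋂ n : ℝ, Ioi n, stdNormalPDF x)) :=
    tendsto_setIntegral_of_antitone (fun _ => measurableSet_Ioi)
      (fun a b hab => Ioi_subset_Ioi hab) ⟨0, integrable_pdf.integrableOn⟩
  have he : (⋂ n : ℝ, Ioi n) = (∅ : Set ℝ) := by
    ext x; simp only [mem_iInter, mem_Ioi, mem_empty_iff_false, iff_false, not_forall, not_lt]
    exact ⟨x, le_refl x⟩
  rw [he] at h
  simp only [Measure.restrict_empty, integral_zero_measure] at h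
  exact h.congr (fun z => (tail_eq z).symm)

lemma pdf_tendsto : Tendsto stdNormalPDF atTop (𝓝 0) := by
  have h1 : Tendsto (fun x : ℝ => -x ^ 2 / 2) atTop atBot := by
    apply Tendsto.atBot_div_const (by norm_num)
    exact tendsto_neg_atBot_iff.mpr (tendsto_pow_atTop (by norm_num))
  have h2 := Real.tendsto_exp_atBot.comp h1
  have h3 := h2.div_const (Real.sqrt (2 * π))
  rw [zero_div] at h3
  exact h3.congr fun x => rfl

end SW

namespace SW2
open SW

lemma s_sq (z c : ℝ) (hc : 0 < c) : (Real.sqrt (z ^ 2 + c)) ^ 2 = z ^ 2 + c :=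
  Real.sq_sqrt (by positivity)

lemma s_pos (z c : ℝ) (hc : 0 < c) : 0 < Real.sqrt (z ^ 2 + c) :=
  Real.sqrt_pos.2 (by positivity)

lemma hasDerivAt_s (z c : ℝ) (hc : 0 < c) :
    HasDerivAt (fun x => Real.sqrt (x ^ 2 + c)) (z / Real.sqrt (z ^ 2 + c)) z := by
  have h1 : HasDerivAt (fun x : ℝ => x ^ 2 + c) (2 * z) z := by
    simpa using (hasDerivAt_pow 2 z).add_const c
  have h2 := (Real.hasDerivAt_sqrt (show z ^ 2 + c ≠ 0 by positivity)).comp z h1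
  refine h2.congr_deriv ?_
  field_simp

lemma zs_pos (z : ℝ) : 0 < z + Real.sqrt (z ^ 2 + 4) := by
  rcases le_or_gt 0 z with h | h
  · have := s_pos z 4 (by norm_num); linarith
  · have h1 : Real.sqrt ((-z) ^ 2) < Real.sqrt (z ^ 2 + 4) :=
      Real.sqrt_lt_sqrt (by positivity) (by nlinarith)
    rw [Real.sqrt_sq (by linarith)] at h1
    linarith

lemma zt_pos {z : ℝ} (hz : -1 < z) : 0 < 3 * z + Real.sqrt (z ^ 2 + 8) := by
  rcases le_or_gt 0 z with h | h
  · have := s_pos z 8 (by norm_num); linarith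
  · have h1 : Real.sqrt ((-(3 * z)) ^ 2) < Real.sqrt (z ^ 2 + 8) :=
      Real.sqrt_lt_sqrt (by positivity) (by nlinarith)
    rw [Real.sqrt_sq (by linarith)] at h1
    linarith

lemma key1 (z : ℝ) :
    z * (2 / (z + Real.sqrt (z ^ 2 + 4))) -
      (0 * (z + Real.sqrt (z ^ 2 + 4)) - 2 * (1 + z / Real.sqrt (z ^ 2 + 4))) /
        (z + Real.sqrt (z ^ 2 + 4)) ^ 2 ≤ 1 := by
  set s := Real.sqrt (z ^ 2 + 4) with hs
  have hs2 : s ^ 2 = z ^ 2 + 4 := s_sq z 4 (by norm_num)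
  have hs0 : 0 < s := s_pos z 4 (by norm_num)
  have hzs : 0 < z + s := zs_pos z
  have hk : z * s ≤ z ^ 2 + 2 := by
    rcases le_or_gt z 0 with h | h
    · nlinarith
    · have h2 : (z * s) ^ 2 < (z ^ 2 + 2) ^ 2 := by
        rw [mul_pow, hs2]; nlinarith
      nlinarith
  have hE : z * (2 / (z + s)) - (0 * (z + s) - 2 * (1 + z / s)) / (z + s) ^ 2 - 1 =
      (z * s - s ^ 2 + 2) / (s * (z + s)) := by
    field_simp
    ring
  have hnum : z * s - s ^ 2 + 2 ≤ 0 := by rw [hs2]; linarith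
  have := div_nonpos_of_nonpos_of_nonneg hnum (le_of_lt (mul_pos hs0 hzs))
  linarith [hE ▸ this]

lemma key2 {z : ℝ} (hz : -1 < z) :
    1 ≤ z * (4 / (3 * z + Real.sqrt (z ^ 2 + 8))) -
      (0 * (3 * z + Real.sqrt (z ^ 2 + 8)) - 4 * (3 + z / Real.sqrt (z ^ 2 + 8))) /
        (3 * z + Real.sqrt (z ^ 2 + 8)) ^ 2 := by
  set t := Real.sqrt (z ^ 2 + 8) with ht
  have ht2 : t ^ 2 = z ^ 2 + 8 := s_sq z 8 (by norm_num)
  have ht0 : 0 < t := s_pos z 8 (by norm_num)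
  have hzt : 0 < 3 * z + t := zt_pos hz
  have hk : z * (z ^ 2 + 6) ≤ (z ^ 2 + 2) * t := by
    rcases le_or_gt z 0 with h | h
    · nlinarith
    · have h2 : (z * (z ^ 2 + 6)) ^ 2 < ((z ^ 2 + 2) * t) ^ 2 := by
        rw [mul_pow, mul_pow, ht2]; nlinarith
      have := lt_of_pow_lt_pow_left₀ 2 (by positivity : (0:ℝ) ≤ (z ^ 2 + 2) * t) h2
      linarith
  have hE : z * (4 / (3 * z + t)) - (0 * (3 * z + t) - 4 * (3 + z / t)) / (3 * z + t) ^ 2 - 1 =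
      (3 * z ^ 2 * t - 2 * z * t ^ 2 + 12 * t + 4 * z - t ^ 3) / (t * (3 * z + t) ^ 2) := by
    field_simp [(show (0:ℝ) < z * 3 + t by linarith).ne']
    ring
  have hnum : 0 ≤ 3 * z ^ 2 * t - 2 * z * t ^ 2 + 12 * t + 4 * z - t ^ 3 := by
    have e3 : t ^ 3 = (z ^ 2 + 8) * t := by rw [pow_succ, ht2]
    rw [e3, ht2]; nlinarith
  have := div_nonneg hnum (le_of_lt (mul_pos ht0 (pow_pos hzt 2)))
  linarith [hE ▸ this]

end SW2

namespace SW3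
open SW SW2

noncomputable def F (x : ℝ) : ℝ :=
  (1 - stdNormalCDF x) - stdNormalPDF x * (2 / (x + Real.sqrt (x ^ 2 + 4)))

noncomputable def G (x : ℝ) : ℝ :=
  (1 - stdNormalCDF x) - stdNormalPDF x * (4 / (3 * x + Real.sqrt (x ^ 2 + 8)))

lemma hasDerivAt_F (z : ℝ) :
    HasDerivAt F
      (-stdNormalPDF z - ((-z * stdNormalPDF z) * (2 / (z + Real.sqrt (z ^ 2 + 4))) +
        stdNormalPDF z * ((0 * (z + Real.sqrt (z ^ 2 + 4)) - 2 * (1 + z / Real.sqrt (z ^ 2 + 4))) /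
          (z + Real.sqrt (z ^ 2 + 4)) ^ 2))) z := by
  have hden : HasDerivAt (fun x : ℝ => x + Real.sqrt (x ^ 2 + 4))
      (1 + z / Real.sqrt (z ^ 2 + 4)) z :=
    (hasDerivAt_id z).add (hasDerivAt_s z 4 (by norm_num))
  have hb : HasDerivAt (fun x : ℝ => 2 / (x + Real.sqrt (x ^ 2 + 4)))
      ((0 * (z + Real.sqrt (z ^ 2 + 4)) - 2 * (1 + z / Real.sqrt (z ^ 2 + 4))) /
        (z + Real.sqrt (z ^ 2 + 4)) ^ 2) z :=
    (hasDerivAt_const z 2).div hden (ne_of_gt (zs_pos z))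
  have h1 : HasDerivAt (fun x => 1 - stdNormalCDF x) (-stdNormalPDF z) z := by
    simpa using (hasDerivAt_cdf z).const_sub 1
  exact h1.sub ((hasDerivAt_pdf z).mul hb)

lemma hasDerivAt_G {z : ℝ} (hz : -1 < z) :
    HasDerivAt G
      (-stdNormalPDF z - ((-z * stdNormalPDF z) * (4 / (3 * z + Real.sqrt (z ^ 2 + 8))) +
        stdNormalPDF z * ((0 * (3 * z + Real.sqrt (z ^ 2 + 8)) -
            4 * (3 + z / Real.sqrt (z ^ 2 + 8))) /
          (3 * z + Real.sqrt (z ^ 2 + 8)) ^ 2))) z := by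
  have hden : HasDerivAt (fun x : ℝ => 3 * x + Real.sqrt (x ^ 2 + 8))
      (3 + z / Real.sqrt (z ^ 2 + 8)) z := by
    have h3 : HasDerivAt (fun x : ℝ => 3 * x) 3 z := by
      simpa using (hasDerivAt_id z).const_mul 3
    exact h3.add (hasDerivAt_s z 8 (by norm_num))
  have hb : HasDerivAt (fun x : ℝ => 4 / (3 * x + Real.sqrt (x ^ 2 + 8)))
      ((0 * (3 * z + Real.sqrt (z ^ 2 + 8)) - 4 * (3 + z / Real.sqrt (z ^ 2 + 8))) /
        (3 * z + Real.sqrt (z ^ 2 + 8)) ^ 2) z :=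
    (hasDerivAt_const z 4).div hden (ne_of_gt (zt_pos hz))
  have h1 : HasDerivAt (fun x => 1 - stdNormalCDF x) (-stdNormalPDF z) z := by
    simpa using (hasDerivAt_cdf z).const_sub 1
  exact h1.sub ((hasDerivAt_pdf z).mul hb)

lemma F_anti : Antitone F := by
  apply antitone_of_deriv_nonpos (fun x => (hasDerivAt_F x).differentiableAt)
  intro x
  rw [(hasDerivAt_F x).deriv]
  nlinarith [pdf_pos x, key1 x]

lemma G_mono : MonotoneOn G (Ioi (-1 : ℝ)) := by
  apply monotoneOn_of_deriv_nonneg (convex_Ioi _)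
  · intro x hx
    exact ((hasDerivAt_G (mem_Ioi.mp hx)).differentiableAt).continuousAt.continuousWithinAt
  · rw [interior_Ioi]
    intro x hx
    exact (hasDerivAt_G (mem_Ioi.mp hx)).differentiableAt.differentiableWithinAt
  · rw [interior_Ioi]
    intro x hx
    rw [(hasDerivAt_G (mem_Ioi.mp hx)).deriv]
    nlinarith [pdf_pos x, key2 (mem_Ioi.mp hx)]

lemma F_tendsto : Tendsto F atTop (𝓝 0) := by
  have h2 : Tendsto (fun x => stdNormalPDF x * (2 / (x + Real.sqrt (x ^ 2 + 4)))) atTop (𝓝 0) := by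
    apply squeeze_zero' (g := fun x => 2 * stdNormalPDF x)
    · filter_upwards with x
      exact mul_nonneg (pdf_pos x).le (div_nonneg (by norm_num) (zs_pos x).le)
    · filter_upwards [eventually_ge_atTop (0 : ℝ)] with x hx
      have hs2 : (Real.sqrt (x ^ 2 + 4)) ^ 2 = x ^ 2 + 4 := s_sq x 4 (by norm_num)
      have hs0 : 0 ≤ Real.sqrt (x ^ 2 + 4) := Real.sqrt_nonneg _
      have h1 : (1 : ℝ) ≤ x + Real.sqrt (x ^ 2 + 4) := by nlinarith
      have h2 : 2 / (x + Real.sqrt (x ^ 2 + 4)) ≤ 2 := by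
        rw [div_le_iff₀ (by linarith)]; nlinarith
      nlinarith [pdf_pos x]
    · simpa using pdf_tendsto.const_mul 2
  have := tail_tendsto.sub h2
  unfold F
  simpa using this
lemma G_tendsto : Tendsto G atTop (𝓝 0) := by
  have h2 : Tendsto (fun x => stdNormalPDF x * (4 / (3 * x + Real.sqrt (x ^ 2 + 8)))) atTop
      (𝓝 0) := by
    apply squeeze_zero' (g := fun x => 2 * stdNormalPDF x)
    · filter_upwards [eventually_ge_atTop (0 : ℝ)] with x hx
      exact mul_nonneg (pdf_pos x).le (div_nonneg (by norm_num) (zt_pos (by linarith)).le)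
    · filter_upwards [eventually_ge_atTop (0 : ℝ)] with x hx
      have hs2 : (Real.sqrt (x ^ 2 + 8)) ^ 2 = x ^ 2 + 8 := s_sq x 8 (by norm_num)
      have hs0 : 0 ≤ Real.sqrt (x ^ 2 + 8) := Real.sqrt_nonneg _
      have h1 : (2 : ℝ) ≤ 3 * x + Real.sqrt (x ^ 2 + 8) := by nlinarith
      have h2 : 4 / (3 * x + Real.sqrt (x ^ 2 + 8)) ≤ 2 := by
        rw [div_le_iff₀ (by linarith)]; nlinarith
      nlinarith [pdf_pos x]
    · simpa using pdf_tendsto.const_mul 2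
  have := tail_tendsto.sub h2
  unfold G
  simpa using this

end SW3


/-- Komatsu's lower bound and the Szarek–Werner upper bound: for z > −1,
2φ(z)/(z + √(z²+4)) ≤ 1 − Φ(z) ≤ 4φ(z)/(3z + √(z²+8)). -/
theorem stmt16 (z : ℝ) (hz : -1 < z) :
    2 * stdNormalPDF z / (z + Real.sqrt (z ^ 2 + 4)) ≤ 1 - stdNormalCDF z ∧
      1 - stdNormalCDF z ≤ 4 * stdNormalPDF z / (3 * z + Real.sqrt (z ^ 2 + 8)) := by
  constructor
  · have h0 : (0 : ℝ) ≤ SW3.F z := by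
      apply le_of_tendsto SW3.F_tendsto
      filter_upwards [eventually_ge_atTop z] with y hy
      exact SW3.F_anti hy
    have e : 2 * stdNormalPDF z / (z + Real.sqrt (z ^ 2 + 4)) =
        stdNormalPDF z * (2 / (z + Real.sqrt (z ^ 2 + 4))) := by ring
    rw [e]
    have := h0
    rw [SW3.F] at this
    linarith
  · have h0 : SW3.G z ≤ 0 := by
      apply ge_of_tendsto SW3.G_tendsto
      filter_upwards [eventually_ge_atTop z] with y hy
      exact SW3.G_mono (mem_Ioi.mpr hz) (mem_Ioi.mpr (lt_of_lt_of_le hz hy)) hy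
    have e : 4 * stdNormalPDF z / (3 * z + Real.sqrt (z ^ 2 + 8)) =
        stdNormalPDF z * (4 / (3 * z + Real.sqrt (z ^ 2 + 8))) := by ring
    rw [e]
    rw [SW3.G] at h0
    linarith
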